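/- There exists an optimal schedule σ* in which the earlier-schedule jobs appear in increasing index order of start times, the later-schedule jobs appear in increasing index order of start times, and the machine does not idle in the later schedule: the later-schedule job with the smallest start time starts exactly at time T_2, and every other later-schedule job starts exactly at the completion time of the later-schedule job immediately preceding it. -/

import Mathlib

open Finset

variable (n : ℕ)

/-- Completion time of job `j` in the original WSPT schedule `π*`:
`C_j(π*) = p_1 + ⋯ + p_j`. -/
def Corig (p : Fin n → ℤ) (j : Fin n) : ℤ :=
  ∑ i ∈ Finset.univ.filter (fun i => i ≤ j), p i

/-- Start time of job `j` in the original schedule `π*`. -/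
def Sorig (p : Fin n → ℤ) (j : Fin n) : ℤ :=
  Corig n p j - p j

/-- A feasible schedule: integer start times `σ j ≥ 0`, pairwise disjoint open
processing intervals, and every job either completes by `T1` (earlier schedule)
or starts at or after `T2` (later schedule). -/
def Feasible (p : Fin n → ℤ) (T1 T2 : ℤ) (σ : Fin n → ℤ) : Prop :=
  (∀ j, 0 ≤ σ j) ∧
  (∀ i j, i ≠ j → σ i + p i ≤ σ j ∨ σ j + p j ≤ σ i) ∧
  (∀ j, σ j + p j ≤ T1 ∨ T2 ≤ σ j)

/-- Time deviation of job `j`: `Δ_j(σ) = |C_j(σ) − C_j(π*)|`. -/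
def Dev (p : Fin n → ℤ) (σ : Fin n → ℤ) (j : Fin n) : ℤ :=
  |σ j + p j - Corig n p j|

/-- Maximum time deviation `Δ_max(σ) = max_{1≤j≤n} Δ_j(σ)` (all deviations are
nonnegative, so folding `max` from `0` gives the maximum when `n ≥ 1`). -/
def Dmax (p : Fin n → ℤ) (σ : Fin n → ℤ) : ℤ :=
  Finset.fold max 0 (Dev n p σ) Finset.univ

/-- Admissible: feasible with `Δ_max(σ) ≤ k`. -/
def Admissible (p : Fin n → ℤ) (T1 T2 k : ℤ) (σ : Fin n → ℤ) : Prop :=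
  Feasible n p T1 T2 σ ∧ Dmax n p σ ≤ k

/-- Total weighted completion time `Σ_j w_j · C_j(σ)`. -/
def WObj (p w : Fin n → ℤ) (σ : Fin n → ℤ) : ℤ :=
  ∑ j, w j * (σ j + p j)

/-- The objective `Z(σ) = μ·Δ_max(σ) + Σ_j w_j·C_j(σ)`. -/
def Zval (p w : Fin n → ℤ) (μ : ℚ) (σ : Fin n → ℤ) : ℚ :=
  μ * (Dmax n p σ : ℚ) + (WObj n p w σ : ℚ)

/-- Optimal: admissible and minimizing `Z` over all admissible schedules. -/
def Optimal (p w : Fin n → ℤ) (T1 T2 k : ℤ) (μ : ℚ) (σ : Fin n → ℤ) : Prop :=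
  Admissible n p T1 T2 k σ ∧
  ∀ τ, Admissible n p T1 T2 k τ → Zval n p w μ σ ≤ Zval n p w μ τ

/-- `t ≥ 0` is an earlier-schedule idle time unit of `σ`: no job is processed
during `[t, t+1]` and some earlier-schedule job starts at or after `t+1`. -/
def IdleUnit (p : Fin n → ℤ) (T1 : ℤ) (σ : Fin n → ℤ) (t : ℤ) : Prop :=
  0 ≤ t ∧ (∀ m, ¬(σ m ≤ t ∧ t + 1 ≤ σ m + p m)) ∧
  ∃ j, σ j + p j ≤ T1 ∧ t + 1 ≤ σ j

section aux

variable {n : ℕ}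

lemma dev_le_dmax (p σ : Fin n → ℤ) (j : Fin n) : Dev n p σ j ≤ Dmax n p σ :=
  (Finset.le_fold_max _).2 (Or.inr ⟨j, mem_univ j, le_rfl⟩)

lemma dmax_nonneg (p σ : Fin n → ℤ) : 0 ≤ Dmax n p σ :=
  (Finset.le_fold_max _).2 (Or.inl le_rfl)

lemma dmax_le (p σ : Fin n → ℤ) {b : ℤ} (h0 : 0 ≤ b) (h : ∀ j, Dev n p σ j ≤ b) :
    Dmax n p σ ≤ b :=
  (Finset.fold_max_le _).2 ⟨h0, fun x _ => h x⟩

lemma corig_mono {p : Fin n → ℤ} (hp : ∀ j, 0 < p j) {i j : Fin n} (hij : i ≤ j) :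
    Corig n p i ≤ Corig n p j := by
  apply Finset.sum_le_sum_of_subset_of_nonneg
  · intro x hx
    simp only [mem_filter, mem_univ, true_and] at *
    exact hx.trans hij
  · exact fun x _ _ => (hp x).le

lemma corig_lt {p : Fin n → ℤ} (hp : ∀ j, 0 < p j) {i j : Fin n} (hij : i < j) :
    Corig n p i + p j ≤ Corig n p j := by
  classical
  have hji : j ∉ univ.filter (fun m : Fin n => m ≤ i) := by
    simp only [mem_filter, mem_univ, true_and]
    exact fun h => absurd (h.trans_lt' hij) (lt_irrefl _)
  have h1 : Corig n p i + p j = ∑ m ∈ insert j (univ.filter (fun m : Fin n => m ≤ i)), p m := by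
    rw [Finset.sum_insert hji, Corig]; ring
  rw [h1, Corig]
  apply Finset.sum_le_sum_of_subset_of_nonneg
  · intro x hx
    simp only [mem_insert, mem_filter, mem_univ, true_and] at *
    rcases hx with rfl | hx
    · exact le_rfl
    · exact hx.trans hij.le
  · exact fun x _ _ => (hp x).le

lemma corig_le_sum {p : Fin n → ℤ} (hp : ∀ j, 0 < p j) (j : Fin n) :
    Corig n p j ≤ ∑ i, p i := by
  apply Finset.sum_le_sum_of_subset_of_nonneg (Finset.subset_univ _)
  exact fun x _ _ => (hp x).le

lemma packing {p σ : Fin n → ℤ} (hp : ∀ j, 0 < p j)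
    (hdisj : ∀ i j : Fin n, i ≠ j → σ i + p i ≤ σ j ∨ σ j + p j ≤ σ i)
    (a : ℤ) (S : Finset (Fin n)) :
    ∀ b : ℤ, a ≤ b → (∀ m ∈ S, a ≤ σ m ∧ σ m + p m ≤ b) →
      ∑ m ∈ S, p m ≤ b - a := by
  induction S using Finset.strongInduction with
  | _ S ih =>
    intro b hab hS
    rcases S.eq_empty_or_nonempty with rfl | hne
    · simp; omega
    · obtain ⟨m, hm, hmax⟩ := S.exists_max_image σ hne
      have key : ∀ x ∈ S.erase m, a ≤ σ x ∧ σ x + p x ≤ σ m := by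
        intro x hx
        have hxS := Finset.mem_of_mem_erase hx
        have hxm : x ≠ m := Finset.ne_of_mem_erase hx
        refine ⟨(hS x hxS).1, ?_⟩
        rcases hdisj x m hxm with h1 | h1
        · exact h1
        · have := hmax x hxS
          have := hp m
          omega
      have h1 : ∑ x ∈ S.erase m, p x ≤ σ m - a :=
        ih (S.erase m) (Finset.erase_ssubset hm) (σ m) (hS m hm).1 key
      have h2 : p m + ∑ x ∈ S.erase m, p x = ∑ x ∈ S, p x := Finset.add_sum_erase _ _ hm
      have := (hS m hm).2
      omega

lemma sum_sub_two {f g : Fin n → ℤ} {i j : Fin n} (hij : i ≠ j)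
    (h : ∀ m, m ≠ i → m ≠ j → f m = g m) :
    ∑ m, f m = ∑ m, g m + ((f i - g i) + (f j - g j)) := by
  have h1 : ∑ m, (f m - g m) = ∑ m ∈ ({i, j} : Finset (Fin n)), (f m - g m) := by
    refine (Finset.sum_subset (Finset.subset_univ _) ?_).symm
    intro x _ hx
    simp only [Finset.mem_insert, Finset.mem_singleton] at hx
    push_neg at hx
    rw [h x hx.1 hx.2]; ring
  rw [Finset.sum_pair hij] at h1
  have h2 : ∑ m, (f m - g m) = ∑ m, f m - ∑ m, g m := Finset.sum_sub_distrib f g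
  omega

lemma sum_sub_one {f g : Fin n → ℤ} {j : Fin n}
    (h : ∀ m, m ≠ j → f m = g m) :
    ∑ m, f m = ∑ m, g m + (f j - g j) := by
  have h1 : ∑ m, (f m - g m) = ∑ m ∈ ({j} : Finset (Fin n)), (f m - g m) := by
    refine (Finset.sum_subset (Finset.subset_univ _) ?_).symm
    intro x _ hx
    simp only [Finset.mem_singleton] at hx
    rw [h x hx]; ring
  rw [Finset.sum_singleton] at h1
  have h2 : ∑ m, (f m - g m) = ∑ m, f m - ∑ m, g m := Finset.sum_sub_distrib f g
  omega

end aux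
section aux2

variable {n : ℕ}

/-- Distinct jobs have distinct start times. -/
lemma starts_ne {p σ : Fin n → ℤ} (hp : ∀ j, 0 < p j)
    (hdisj : ∀ i j : Fin n, i ≠ j → σ i + p i ≤ σ j ∨ σ j + p j ≤ σ i)
    {i j : Fin n} (hij : i ≠ j) : σ i ≠ σ j := by
  intro h
  rcases hdisj i j hij with h1 | h1
  · have := hp i; omega
  · have := hp j; omega

lemma ordered_sep {p σ : Fin n → ℤ} (hp : ∀ j, 0 < p j)
    (hdisj : ∀ i j : Fin n, i ≠ j → σ i + p i ≤ σ j ∨ σ j + p j ≤ σ i)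
    {i j : Fin n} (hij : i ≠ j) (h : σ i < σ j) : σ i + p i ≤ σ j := by
  rcases hdisj i j hij with h1 | h1
  · exact h1
  · have := hp j; omega

/-- Tie-breaking potential. -/
def Phi (p σ : Fin n → ℤ) : ℤ :=
  ∑ m : Fin n, ((∑ i, p i) + 1) ^ (n - 1 - m.val) * σ m

lemma zval_le {p w : Fin n → ℤ} {μ : ℚ} (hμ : 0 ≤ μ) {τ σ : Fin n → ℤ}
    (hW : WObj n p w τ ≤ WObj n p w σ) (hD : Dmax n p τ ≤ Dmax n p σ) :
    Zval n p w μ τ ≤ Zval n p w μ σ := by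
  unfold Zval
  have h1 : (Dmax n p τ : ℚ) ≤ (Dmax n p σ : ℚ) := by exact_mod_cast hD
  have h2 : (WObj n p w τ : ℚ) ≤ (WObj n p w σ : ℚ) := by exact_mod_cast hW
  have h3 := mul_le_mul_of_nonneg_left h1 hμ
  linarith

lemma zval_lt {p w : Fin n → ℤ} {μ : ℚ} (hμ : 0 ≤ μ) {τ σ : Fin n → ℤ}
    (hW : WObj n p w τ < WObj n p w σ) (hD : Dmax n p τ ≤ Dmax n p σ) :
    Zval n p w μ τ < Zval n p w μ σ := by
  unfold Zval
  have h1 : (Dmax n p τ : ℚ) ≤ (Dmax n p σ : ℚ) := by exact_mod_cast hD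
  have h2 : (WObj n p w τ : ℚ) < (WObj n p w σ : ℚ) := by exact_mod_cast hW
  have h3 := mul_le_mul_of_nonneg_left h1 hμ
  linarith

lemma adm_mem_box {p σ : Fin n → ℤ} {T1 T2 k : ℤ} (hp : ∀ j, 0 < p j)
    (hadm : Admissible n p T1 T2 k σ) :
    σ ∈ Fintype.piFinset (fun _ : Fin n => Finset.Icc (0 : ℤ) ((∑ i, p i) + k)) := by
  rw [Fintype.mem_piFinset]
  intro j
  rw [Finset.mem_Icc]
  refine ⟨hadm.1.1 j, ?_⟩
  have h1 : Dev n p σ j ≤ k := (dev_le_dmax p σ j).trans hadm.2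
  have h2 : σ j + p j - Corig n p j ≤ Dev n p σ j := le_abs_self _
  have h3 := corig_le_sum hp j
  have := hp j
  omega

end aux2
section exchange

variable {n : ℕ}

lemma exchange {p w σ : Fin n → ℤ} {T1 T2 k : ℤ}
    (hp : ∀ j, 0 < p j) (hw : ∀ j, 0 < w j)
    (hwspt : ∀ i j : Fin n, i ≤ j → p i * w j ≤ p j * w i)
    (hadm : Admissible n p T1 T2 k σ)
    {i j : Fin n} (hij : i < j) (hji : σ j < σ i)
    (hhalf : (σ i + p i ≤ T1 ∧ σ j + p j ≤ T1) ∨ T2 ≤ σ j)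
    (hsep : ∀ m, m ≠ i → m ≠ j → σ m + p m ≤ σ j ∨ σ i + p i ≤ σ m) :
    ∃ τ, Admissible n p T1 T2 k τ ∧ WObj n p w τ ≤ WObj n p w σ ∧
      Dmax n p τ ≤ Dmax n p σ ∧ Phi p τ < Phi p σ := by
  obtain ⟨⟨hpos, hdisj, hhalves⟩, hdk⟩ := hadm
  have hine : i ≠ j := hij.ne
  have hji' : σ j + p j ≤ σ i := by
    rcases hdisj i j hine with h1 | h1
    · have := hp i; omega
    · exact h1
  set τ : Fin n → ℤ := fun m => if m = i then σ j else if m = j then σ j + p i else σ m with hτ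
  have hτi : τ i = σ j := by simp [hτ]
  have hτj : τ j = σ j + p i := by simp [hτ, hij.ne']
  have hτm : ∀ m, m ≠ i → m ≠ j → τ m = σ m := by
    intro m h1 h2; simp [hτ, h1, h2]
  have hpi := hp i
  have hpj := hp j
  -- pairwise separation of the new schedule
  have hdisj' : ∀ a b : Fin n, a ≠ b → τ a + p a ≤ τ b ∨ τ b + p b ≤ τ a := by
    intro a b hab
    rcases eq_or_ne a i with ha | hai
    · rcases eq_or_ne b j with hb | hbj
      · rw [ha, hb, hτi, hτj]; left; omega
      · have hbi : b ≠ i := fun h => hab (ha.trans h.symm)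
        rw [ha, hτi, hτm b hbi hbj]
        rcases hsep b hbi hbj with h1 | h1
        · right; omega
        · left; omega
    · rcases eq_or_ne a j with ha | haj
      · rcases eq_or_ne b i with hb | hbi
        · rw [ha, hb, hτi, hτj]; right; omega
        · have hbj : b ≠ j := fun h => hab (ha.trans h.symm)
          rw [ha, hτj, hτm b hbi hbj]
          rcases hsep b hbi hbj with h1 | h1
          · right; omega
          · left; omega
      · rw [hτm a hai haj]
        rcases eq_or_ne b i with hb | hbi
        · rw [hb, hτi]
          rcases hsep a hai haj with h1 | h1
          · left; omega
          · right; omega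
        · rcases eq_or_ne b j with hb | hbj
          · rw [hb, hτj]
            rcases hsep a hai haj with h1 | h1
            · left; omega
            · right; omega
          · rw [hτm b hbi hbj]
            exact hdisj a b hab
  have hfeas' : Feasible n p T1 T2 τ := by
    refine ⟨?_, hdisj', ?_⟩
    · intro m
      rcases eq_or_ne m i with hm | hmi
      · rw [hm, hτi]; exact hpos j
      · rcases eq_or_ne m j with hm | hmj
        · rw [hm, hτj]; have := hpos j; omega
        · rw [hτm m hmi hmj]; exact hpos m
    · intro m
      rcases eq_or_ne m i with hm | hmi
      · rw [hm, hτi]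
        rcases hhalf with ⟨h1, h2⟩ | h1
        · left; omega
        · right; omega
      · rcases eq_or_ne m j with hm | hmj
        · rw [hm, hτj]
          rcases hhalf with ⟨h1, h2⟩ | h1
          · left; omega
          · right; omega
        · rw [hτm m hmi hmj]
          exact hhalves m
  -- deviation bounds
  have hDi := dev_le_dmax p σ i
  have hDj := dev_le_dmax p σ j
  have habsi : σ i + p i - Corig n p i ≤ Dev n p σ i := le_abs_self _
  have habsj : -(σ j + p j - Corig n p j) ≤ Dev n p σ j := neg_le_abs _
  have hclt : Corig n p i + p j ≤ Corig n p j := corig_lt hp hij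
  have hcle : Corig n p i ≤ Corig n p j := corig_mono hp hij.le
  have hDmax' : Dmax n p τ ≤ Dmax n p σ := by
    apply dmax_le _ _ (dmax_nonneg p σ)
    intro m
    rcases eq_or_ne m i with hm | hmi
    · unfold Dev
      rw [hm, hτi, abs_le]
      constructor
      · omega
      · omega
    · rcases eq_or_ne m j with hm | hmj
      · unfold Dev
        rw [hm, hτj, abs_le]
        constructor
        · omega
        · omega
      · unfold Dev
        rw [hτm m hmi hmj]
        exact dev_le_dmax p σ m
  have hadm' : Admissible n p T1 T2 k τ := ⟨hfeas', hDmax'.trans hdk⟩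
  -- weighted objective
  have hWsum : WObj n p w τ = WObj n p w σ +
      ((w i * (τ i + p i) - w i * (σ i + p i)) + (w j * (τ j + p j) - w j * (σ j + p j))) := by
    unfold WObj
    exact sum_sub_two hine (fun m h1 h2 => by rw [hτm m h1 h2])
  have hW : WObj n p w τ ≤ WObj n p w σ := by
    rw [hWsum, hτi, hτj]
    have h2 := hwspt i j hij.le
    have h3 : w i * (σ j - σ i) ≤ w i * (-p j) :=
      mul_le_mul_of_nonneg_left (by omega) (hw i).le
    nlinarith [hw i, hw j]
  -- potential strictly decreases
  set P : ℤ := ∑ i, p i with hP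
  have hPn : 0 ≤ P := Finset.sum_nonneg (fun x _ => (hp x).le)
  have hpiP : p i ≤ P := Finset.single_le_sum (fun x _ => (hp x).le) (mem_univ i)
  set c : Fin n → ℤ := fun m => (P + 1) ^ (n - 1 - m.val) with hc
  have hcj : 0 < c j := pow_pos (by omega) _
  have hcij : (P + 1) * c j ≤ c i := by
    have h1 : (n - 1 - j.val) + 1 ≤ n - 1 - i.val := by
      have := j.isLt
      have : i.val < j.val := hij
      omega
    calc (P + 1) * c j = (P + 1) ^ ((n - 1 - j.val) + 1) := by rw [hc]; ring
    _ ≤ (P + 1) ^ (n - 1 - i.val) := pow_le_pow_right₀ (by omega) h1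
    _ = c i := rfl
  have hPhisum : Phi p τ = Phi p σ +
      ((c i * τ i - c i * σ i) + (c j * τ j - c j * σ j)) := by
    unfold Phi
    exact sum_sub_two hine (fun m h1 h2 => by rw [hτm m h1 h2])
  have hPhi : Phi p τ < Phi p σ := by
    rw [hPhisum, hτi, hτj]
    have h1 : c i * (σ j - σ i) ≤ c i * (-1) :=
      mul_le_mul_of_nonneg_left (by omega) (by positivity)
    have h2 : c j * p i ≤ c j * P := mul_le_mul_of_nonneg_left hpiP hcj.le
    nlinarith
  exact ⟨τ, hadm', hW, hDmax', hPhi⟩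

end exchange
section shift

variable {n : ℕ}

lemma shift_left {p w σ : Fin n → ℤ} {T1 T2 k : ℤ}
    (hp : ∀ j, 0 < p j) (hw : ∀ j, 0 < w j)
    (hT1 : 0 ≤ T1) (hT12 : T1 < T2)
    (hadm : Admissible n p T1 T2 k σ)
    {j : Fin n} (hj2 : T2 + 1 ≤ σ j)
    (hsep : ∀ m, m ≠ j → σ m + p m ≤ σ j - 1 ∨ σ j + p j ≤ σ m)
    (hC : Corig n p j ≤ σ j + p j - 1) :
    ∃ τ, Admissible n p T1 T2 k τ ∧ WObj n p w τ < WObj n p w σ ∧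
      Dmax n p τ ≤ Dmax n p σ := by
  obtain ⟨⟨hpos, hdisj, hhalves⟩, hdk⟩ := hadm
  set τ : Fin n → ℤ := fun m => if m = j then σ j - 1 else σ m with hτ
  have hτj : τ j = σ j - 1 := by simp [hτ]
  have hτm : ∀ m, m ≠ j → τ m = σ m := by intro m h1; simp [hτ, h1]
  have hpj := hp j
  have hdisj' : ∀ a b : Fin n, a ≠ b → τ a + p a ≤ τ b ∨ τ b + p b ≤ τ a := by
    intro a b hab
    rcases eq_or_ne a j with ha | haj
    · have hbj : b ≠ j := fun h => hab (ha.trans h.symm)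
      rw [ha, hτj, hτm b hbj]
      rcases hsep b hbj with h1 | h1
      · right; omega
      · left; omega
    · rw [hτm a haj]
      rcases eq_or_ne b j with hb | hbj
      · rw [hb, hτj]
        rcases hsep a haj with h1 | h1
        · left; omega
        · right; omega
      · rw [hτm b hbj]
        exact hdisj a b hab
  have hfeas' : Feasible n p T1 T2 τ := by
    refine ⟨?_, hdisj', ?_⟩
    · intro m
      rcases eq_or_ne m j with hm | hmj
      · rw [hm, hτj]; omega
      · rw [hτm m hmj]; exact hpos m
    · intro m
      rcases eq_or_ne m j with hm | hmj
      · rw [hm, hτj]; right; omega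
      · rw [hτm m hmj]; exact hhalves m
  have hDj := dev_le_dmax p σ j
  have habsj : σ j + p j - Corig n p j ≤ Dev n p σ j := le_abs_self _
  have hDmax' : Dmax n p τ ≤ Dmax n p σ := by
    apply dmax_le _ _ (dmax_nonneg p σ)
    intro m
    rcases eq_or_ne m j with hm | hmj
    · unfold Dev
      rw [hm, hτj, abs_le]
      constructor
      · have := dmax_nonneg p σ
        omega
      · omega
    · unfold Dev
      rw [hτm m hmj]
      exact dev_le_dmax p σ m
  have hWsum : WObj n p w τ = WObj n p w σ + (w j * (τ j + p j) - w j * (σ j + p j)) := by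
    unfold WObj
    exact sum_sub_one (fun m h1 => by rw [hτm m h1])
  have hW : WObj n p w τ < WObj n p w σ := by
    rw [hWsum, hτj]
    have h1 : w j * (σ j - 1 + p j) - w j * (σ j + p j) = -w j := by ring
    have := hw j
    omega
  exact ⟨τ, ⟨hfeas', hDmax'.trans hdk⟩, hW, hDmax'⟩

lemma later_bound {p σ : Fin n → ℤ} {T1 T2 : ℤ}
    (hp : ∀ j, 0 < p j) (hT1 : 0 ≤ T1) (hT12 : T1 < T2)
    (hfeas : Feasible n p T1 T2 σ)
    (hsorted : ∀ i j : Fin n, i < j → T2 ≤ σ i → T2 ≤ σ j → σ i < σ j)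
    {j : Fin n} (hj : T2 ≤ σ j) :
    Corig n p j ≤ T1 + (σ j + p j - T2) := by
  classical
  obtain ⟨hpos, hdisj, hhalves⟩ := hfeas
  have hsplit : Corig n p j =
      (∑ i ∈ univ.filter (fun i : Fin n => i ≤ j ∧ σ i + p i ≤ T1), p i) +
      (∑ i ∈ univ.filter (fun i : Fin n => i ≤ j ∧ ¬(σ i + p i ≤ T1)), p i) := by
    rw [Corig, ← Finset.sum_filter_add_sum_filter_not (univ.filter (fun i : Fin n => i ≤ j))
      (fun i => σ i + p i ≤ T1), Finset.filter_filter, Finset.filter_filter]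
  have hE : (∑ i ∈ univ.filter (fun i : Fin n => i ≤ j ∧ σ i + p i ≤ T1), p i) ≤ T1 - 0 := by
    apply packing hp hdisj 0 _ T1 hT1
    intro m hm
    simp only [mem_filter, mem_univ, true_and] at hm
    exact ⟨hpos m, hm.2⟩
  have hL : (∑ i ∈ univ.filter (fun i : Fin n => i ≤ j ∧ ¬(σ i + p i ≤ T1)), p i)
      ≤ (σ j + p j) - T2 := by
    apply packing hp hdisj T2 _ (σ j + p j) (by have := hp j; omega)
    intro m hm
    simp only [mem_filter, mem_univ, true_and] at hm
    have hmT2 : T2 ≤ σ m := (hhalves m).resolve_left hm.2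
    refine ⟨hmT2, ?_⟩
    rcases eq_or_lt_of_le hm.1 with hm1 | hm1
    · rw [hm1]
    · have h1 : σ m < σ j := hsorted m j hm1 hmT2 hj
      have h2 : σ m + p m ≤ σ j := ordered_sep hp hdisj (ne_of_lt hm1) h1
      have := hp j
      omega
  omega

end shift
/-- there exists an optimal schedule with both halves in WSPT
order and no idling in the later schedule: the later-schedule job with the
smallest start time starts exactly at `T2`, and every other later-schedule job
starts exactly at the completion time of the later-schedule job immediately
preceding it. -/
theorem stmt_6 (n : ℕ) (p w : Fin n → ℤ) (T1 T2 k : ℤ) (μ : ℚ)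
    (hn : 0 < n) (hp : ∀ j, 0 < p j) (hw : ∀ j, 0 < w j)
    (hwspt : ∀ i j : Fin n, i ≤ j → p i * w j ≤ p j * w i)
    (hT1 : 0 ≤ T1) (hT12 : T1 < T2) (hk : 0 ≤ k) (hμ : 0 ≤ μ)
    (hadm : ∃ σ, Admissible n p T1 T2 k σ)
    (hP : T1 < ∑ j, p j) :
    ∃ σ, Optimal n p w T1 T2 k μ σ ∧
      (∀ i j : Fin n, i < j → σ i + p i ≤ T1 → σ j + p j ≤ T1 → σ i < σ j) ∧
      (∀ i j : Fin n, i < j → T2 ≤ σ i → T2 ≤ σ j → σ i < σ j) ∧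
      (∀ j, T2 ≤ σ j → (∀ m, T2 ≤ σ m → σ j ≤ σ m) → σ j = T2) ∧
      (∀ j, T2 ≤ σ j → (∃ m, T2 ≤ σ m ∧ σ m < σ j) →
        ∃ i, T2 ≤ σ i ∧ σ i < σ j ∧
          (∀ m, T2 ≤ σ m → σ m < σ j → σ m ≤ σ i) ∧ σ i + p i = σ j) := by
  classical
  set D := Fintype.piFinset (fun _ : Fin n => Finset.Icc (0 : ℤ) ((∑ i, p i) + k)) with hD
  set A := D.filter (fun σ => Admissible n p T1 T2 k σ) with hA
  have hmemA : ∀ σ, Admissible n p T1 T2 k σ ↔ σ ∈ A := by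
    intro σ
    constructor
    · intro h; exact mem_filter.2 ⟨adm_mem_box hp h, h⟩
    · intro h; exact (mem_filter.1 h).2
  obtain ⟨σ0, hσ0⟩ := hadm
  have hAne : A.Nonempty := ⟨σ0, (hmemA σ0).1 hσ0⟩
  obtain ⟨σ1, hσ1A, hσ1min⟩ := A.exists_min_image (Zval n p w μ) hAne
  set A2 := A.filter (fun τ => Zval n p w μ τ ≤ Zval n p w μ σ1) with hA2
  have hA2ne : A2.Nonempty := ⟨σ1, mem_filter.2 ⟨hσ1A, le_rfl⟩⟩
  obtain ⟨σ, hσA2, hσmin⟩ := A2.exists_min_image (Phi p) hA2ne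
  have hσA : σ ∈ A := (mem_filter.1 hσA2).1
  have hσadm : Admissible n p T1 T2 k σ := (mem_filter.1 hσA).2
  have hZσ : Zval n p w μ σ ≤ Zval n p w μ σ1 := (mem_filter.1 hσA2).2
  have hopt : ∀ τ, Admissible n p T1 T2 k τ → Zval n p w μ σ ≤ Zval n p w μ τ :=
    fun τ hτ => hZσ.trans (hσ1min τ ((hmemA τ).1 hτ))
  have hphimin : ∀ τ, Admissible n p T1 T2 k τ → Zval n p w μ τ ≤ Zval n p w μ σ →
      Phi p σ ≤ Phi p τ :=
    fun τ hτ hZ => hσmin τ (mem_filter.2 ⟨(hmemA τ).1 hτ, hZ.trans hZσ⟩)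
  obtain ⟨hpos, hdisj, hhalves⟩ := hσadm.1
  -- earlier half is in WSPT order
  have hsortE : ∀ i j : Fin n, i < j → σ i + p i ≤ T1 → σ j + p j ≤ T1 → σ i < σ j := by
    by_contra hcon
    push_neg at hcon
    obtain ⟨i0, j0, hij0, hi0, hj0, hge0⟩ := hcon
    have hlt0 : σ j0 < σ i0 := lt_of_le_of_ne hge0 (starts_ne hp hdisj hij0.ne).symm
    set BP := (univ : Finset (Fin n × Fin n)).filter
      (fun q => q.1 < q.2 ∧ σ q.1 + p q.1 ≤ T1 ∧ σ q.2 + p q.2 ≤ T1 ∧ σ q.2 < σ q.1) with hBP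
    have hne : BP.Nonempty := ⟨(i0, j0), by
      simp only [hBP, mem_filter, mem_univ, true_and]
      exact ⟨hij0, hi0, hj0, hlt0⟩⟩
    obtain ⟨q, hqBP, hqmin⟩ := BP.exists_min_image (fun q => σ q.1 - σ q.2) hne
    simp only [hBP, mem_filter, mem_univ, true_and] at hqBP
    obtain ⟨hq12, hq1T, hq2T, hqlt⟩ := hqBP
    have hsep : ∀ m, m ≠ q.1 → m ≠ q.2 → σ m + p m ≤ σ q.2 ∨ σ q.1 + p q.1 ≤ σ m := by
      intro m hm1 hm2
      by_cases hmE : σ m + p m ≤ T1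
      · by_cases hlt : σ m < σ q.1
        · by_cases hgt : σ q.2 < σ m
          · exfalso
            rcases lt_or_gt_of_ne hm1 with h | h
            · have hmem : (m, q.2) ∈ BP := by
                simp only [hBP, mem_filter, mem_univ, true_and]
                exact ⟨h.trans hq12, hmE, hq2T, hgt⟩
              have h2 := hqmin _ hmem
              dsimp only at h2
              omega
            · have hmem : (q.1, m) ∈ BP := by
                simp only [hBP, mem_filter, mem_univ, true_and]
                exact ⟨h, hq1T, hmE, hlt⟩
              have h2 := hqmin _ hmem
              dsimp only at h2
              omega
          · left
            have h1 : σ m < σ q.2 := lt_of_le_of_ne (not_lt.1 hgt) (starts_ne hp hdisj hm2)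
            exact ordered_sep hp hdisj hm2 h1
        · right
          have h1 : σ q.1 < σ m := lt_of_le_of_ne (not_lt.1 hlt) (starts_ne hp hdisj hm1).symm
          exact ordered_sep hp hdisj (Ne.symm hm1) h1
      · right
        have h2 : T2 ≤ σ m := (hhalves m).resolve_left hmE
        omega
    obtain ⟨τ, hτadm, hτW, hτD, hτΦ⟩ :=
      exchange hp hw hwspt hσadm hq12 hqlt (Or.inl ⟨hq1T, hq2T⟩) hsep
    have h1 := hphimin τ hτadm (zval_le hμ hτW hτD)
    omega
  -- later half is in WSPT order
  have hsortL : ∀ i j : Fin n, i < j → T2 ≤ σ i → T2 ≤ σ j → σ i < σ j := by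
    by_contra hcon
    push_neg at hcon
    obtain ⟨i0, j0, hij0, hi0, hj0, hge0⟩ := hcon
    have hlt0 : σ j0 < σ i0 := lt_of_le_of_ne hge0 (starts_ne hp hdisj hij0.ne).symm
    set BP := (univ : Finset (Fin n × Fin n)).filter
      (fun q => q.1 < q.2 ∧ T2 ≤ σ q.1 ∧ T2 ≤ σ q.2 ∧ σ q.2 < σ q.1) with hBP
    have hne : BP.Nonempty := ⟨(i0, j0), by
      simp only [hBP, mem_filter, mem_univ, true_and]
      exact ⟨hij0, hi0, hj0, hlt0⟩⟩
    obtain ⟨q, hqBP, hqmin⟩ := BP.exists_min_image (fun q => σ q.1 - σ q.2) hne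
    simp only [hBP, mem_filter, mem_univ, true_and] at hqBP
    obtain ⟨hq12, hq1T, hq2T, hqlt⟩ := hqBP
    have hsep : ∀ m, m ≠ q.1 → m ≠ q.2 → σ m + p m ≤ σ q.2 ∨ σ q.1 + p q.1 ≤ σ m := by
      intro m hm1 hm2
      by_cases hmE : σ m + p m ≤ T1
      · left; omega
      · have hmL : T2 ≤ σ m := (hhalves m).resolve_left hmE
        by_cases hlt : σ m < σ q.1
        · by_cases hgt : σ q.2 < σ m
          · exfalso
            rcases lt_or_gt_of_ne hm1 with h | h
            · have hmem : (m, q.2) ∈ BP := by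
                simp only [hBP, mem_filter, mem_univ, true_and]
                exact ⟨h.trans hq12, hmL, hq2T, hgt⟩
              have h2 := hqmin _ hmem
              dsimp only at h2
              omega
            · have hmem : (q.1, m) ∈ BP := by
                simp only [hBP, mem_filter, mem_univ, true_and]
                exact ⟨h, hq1T, hmL, hlt⟩
              have h2 := hqmin _ hmem
              dsimp only at h2
              omega
          · left
            have h1 : σ m < σ q.2 := lt_of_le_of_ne (not_lt.1 hgt) (starts_ne hp hdisj hm2)
            exact ordered_sep hp hdisj hm2 h1
        · right
          have h1 : σ q.1 < σ m := lt_of_le_of_ne (not_lt.1 hlt) (starts_ne hp hdisj hm1).symm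
          exact ordered_sep hp hdisj (Ne.symm hm1) h1
    obtain ⟨τ, hτadm, hτW, hτD, hτΦ⟩ :=
      exchange hp hw hwspt hσadm hq12 hqlt (Or.inr hq2T) hsep
    have h1 := hphimin τ hτadm (zval_le hμ hτW hτD)
    omega
  -- the earliest later job starts at T2
  have hprop3 : ∀ j, T2 ≤ σ j → (∀ m, T2 ≤ σ m → σ j ≤ σ m) → σ j = T2 := by
    intro j hj hmin
    by_contra hnej
    have hj2 : T2 + 1 ≤ σ j := by omega
    have hsep : ∀ m, m ≠ j → σ m + p m ≤ σ j - 1 ∨ σ j + p j ≤ σ m := by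
      intro m hm
      by_cases hmE : σ m + p m ≤ T1
      · left; omega
      · have hmL : T2 ≤ σ m := (hhalves m).resolve_left hmE
        right
        have h1 : σ j < σ m := lt_of_le_of_ne (hmin m hmL) (starts_ne hp hdisj (Ne.symm hm))
        exact ordered_sep hp hdisj (Ne.symm hm) h1
    have hC : Corig n p j ≤ σ j + p j - 1 := by
      have := later_bound hp hT1 hT12 ⟨hpos, hdisj, hhalves⟩ hsortL hj
      omega
    obtain ⟨τ, hτadm, hτW, hτD⟩ := shift_left hp hw hT1 hT12 hσadm hj2 hsep hC
    have h1 := hopt τ hτadm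
    have h2 := zval_lt hμ hτW hτD
    exact absurd h1 (not_le.2 h2)
  -- no idle time inside the later schedule
  have hprop4 : ∀ j, T2 ≤ σ j → (∃ m, T2 ≤ σ m ∧ σ m < σ j) →
      ∃ i, T2 ≤ σ i ∧ σ i < σ j ∧
        (∀ m, T2 ≤ σ m → σ m < σ j → σ m ≤ σ i) ∧ σ i + p i = σ j := by
    intro j hj hm0
    obtain ⟨m0, hm01, hm02⟩ := hm0
    set L' := univ.filter (fun m : Fin n => T2 ≤ σ m ∧ σ m < σ j) with hL'
    have hL'ne : L'.Nonempty := ⟨m0, by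
      simp only [hL', mem_filter, mem_univ, true_and]; exact ⟨hm01, hm02⟩⟩
    obtain ⟨i, hiL, himax⟩ := L'.exists_max_image σ hL'ne
    simp only [hL', mem_filter, mem_univ, true_and] at hiL
    obtain ⟨hi2, hilt⟩ := hiL
    have himax' : ∀ m, T2 ≤ σ m → σ m < σ j → σ m ≤ σ i := by
      intro m h1 h2
      exact himax m (by simp only [hL', mem_filter, mem_univ, true_and]; exact ⟨h1, h2⟩)
    refine ⟨i, hi2, hilt, himax', ?_⟩
    by_contra hne
    have hij : i ≠ j := fun h => absurd (h ▸ hilt) (lt_irrefl _)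
    have hle : σ i + p i ≤ σ j := ordered_sep hp hdisj hij hilt
    have hlt : σ i + p i ≤ σ j - 1 := by omega
    have hj2 : T2 + 1 ≤ σ j := by have := hp i; omega
    have hsep : ∀ m, m ≠ j → σ m + p m ≤ σ j - 1 ∨ σ j + p j ≤ σ m := by
      intro m hm
      by_cases hmE : σ m + p m ≤ T1
      · left; omega
      · have hmL : T2 ≤ σ m := (hhalves m).resolve_left hmE
        by_cases hmlt : σ m < σ j
        · left
          rcases eq_or_ne m i with hmi | hmi
          · rw [hmi]; exact hlt
          · have h1 : σ m ≤ σ i := himax' m hmL hmlt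
            have h2 : σ m < σ i := lt_of_le_of_ne h1 (starts_ne hp hdisj hmi)
            have h3 : σ m + p m ≤ σ i := ordered_sep hp hdisj hmi h2
            omega
        · right
          have h1 : σ j < σ m := lt_of_le_of_ne (not_lt.1 hmlt) (starts_ne hp hdisj (Ne.symm hm))
          exact ordered_sep hp hdisj (Ne.symm hm) h1
    have hC : Corig n p j ≤ σ j + p j - 1 := by
      have := later_bound hp hT1 hT12 ⟨hpos, hdisj, hhalves⟩ hsortL hj
      omega
    obtain ⟨τ, hτadm, hτW, hτD⟩ := shift_left hp hw hT1 hT12 hσadm hj2 hsep hC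
    have h1 := hopt τ hτadm
    have h2 := zval_lt hμ hτW hτD
    exact absurd h1 (not_le.2 h2)
  exact ⟨σ, ⟨hσadm, hopt⟩, hsortE, hsortL, hprop3, hprop4⟩
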